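/- Let (x₁,p₁,x₂,p₂) be a point of ℝ⁴ with all coordinates nonzero, and let v = (p₁, −x₁, p₂, −x₂) be the harmonic oscillator vector at that point. Let dI₁ = x₁dx₁ + p₁dp₁, dI₂ = x₂dx₂ + p₂dp₂, and J₃ = ½(dx₁/p₁ − dp₁/x₁ − dx₂/p₂ + dp₂/x₂), regarded as covectors on ℝ⁴. Then the following identity of alternating 3-forms holds: dI₁ ∧ dI₂ ∧ J₃ = v ⌟ (dx₁∧dp₁∧dx₂∧dp₂), i.e., for all u, w, s ∈ ℝ⁴, (dI₁∧dI₂∧J₃)(u,w,s) = (dx₁∧dp₁∧dx₂∧dp₂)(v,u,w,s). -/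

import Mathlib

lemma det4_expand (a b c d : Fin 4 → ℝ) :
    (Matrix.of ![a, b, c, d]).det =
      a 0 * (b 1 * (c 2 * d 3 - c 3 * d 2) - b 2 * (c 1 * d 3 - c 3 * d 1)
        + b 3 * (c 1 * d 2 - c 2 * d 1))
      - a 1 * (b 0 * (c 2 * d 3 - c 3 * d 2) - b 2 * (c 0 * d 3 - c 3 * d 0)
        + b 3 * (c 0 * d 2 - c 2 * d 0))
      + a 2 * (b 0 * (c 1 * d 3 - c 3 * d 1) - b 1 * (c 0 * d 3 - c 3 * d 0)
        + b 3 * (c 0 * d 1 - c 1 * d 0))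
      - a 3 * (b 0 * (c 1 * d 2 - c 2 * d 1) - b 1 * (c 0 * d 2 - c 2 * d 0)
        + b 2 * (c 0 * d 1 - c 1 * d 0)) := by
  simp [Matrix.det_succ_row_zero, Fin.sum_univ_succ, Fin.succAbove, Matrix.det_fin_three,
    show (Fin.succ 2 : Fin 4) = 3 from rfl, show ((2 : Fin 3).castSucc = (2 : Fin 4)) from rfl,
    show ((1 : Fin 4) < Fin.succ 2) = True from by decide]
  ring

/-- The Nambu decomposition `dh = dI₁ ∧ dI₂ ∧ J₃ = v ⌟ Ω` of the harmonic
oscillator flow in ℝ⁴.  Coordinates `(x₁, p₁, x₂, p₂)` are numbered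
`(0, 1, 2, 3)`; `v = (p₁, -x₁, p₂, -x₂)` is the oscillator vector at a point
with all coordinates nonzero.  With `dI₁ = x₁dx₁ + p₁dp₁`,
`dI₂ = x₂dx₂ + p₂dp₂`, `J₃ = ½(dx₁/p₁ - dp₁/x₁ - dx₂/p₂ + dp₂/x₂)`, the wedge
`(dI₁∧dI₂∧J₃)(u,w,s)` — computed by the determinant convention
`(α∧β∧γ)(u,w,s) = det (α u, α w, α s; β u, β w, β s; γ u, γ w, γ s)` — equals
`(dx₁∧dp₁∧dx₂∧dp₂)(v,u,w,s) = det` of the matrix with rows `v, u, w, s`. -/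
theorem oscillator_nambu_decomposition (x₁ p₁ x₂ p₂ : ℝ)
    (hx₁ : x₁ ≠ 0) (hp₁ : p₁ ≠ 0) (hx₂ : x₂ ≠ 0) (hp₂ : p₂ ≠ 0) :
    ∀ u w s : Fin 4 → ℝ,
      (let dI₁ : (Fin 4 → ℝ) → ℝ := fun t => x₁ * t 0 + p₁ * t 1
       let dI₂ : (Fin 4 → ℝ) → ℝ := fun t => x₂ * t 2 + p₂ * t 3
       let J₃ : (Fin 4 → ℝ) → ℝ := fun t =>
         (1 / 2 : ℝ) * (t 0 / p₁ - t 1 / x₁ - t 2 / p₂ + t 3 / x₂)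
       Matrix.det !![dI₁ u, dI₁ w, dI₁ s; dI₂ u, dI₂ w, dI₂ s; J₃ u, J₃ w, J₃ s])
      = Matrix.det (Matrix.of ![![p₁, -x₁, p₂, -x₂], u, w, s]) := by
  intro u w s
  rw [det4_expand]
  simp only [Matrix.det_fin_three, Matrix.cons_val_zero, Matrix.cons_val_one,
    Matrix.head_cons, Matrix.cons_val_two, Matrix.cons_val_three, Matrix.tail_cons,
    Matrix.of_apply]
  field_simp
  ring
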